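/- Let K ≥ 2 and N ≥ 1 be integers. Define the points Q_m = (mN/K, N(K−m)/(Km)) ∈ ℝ² for m ∈ {1,…,K}, and for j ∈ {1,…,K−1} define L_j(S) = N(K−j)/(Kj) − K(S − jN/K)/(j(j+1)). Then for every real S with N/K ≤ S ≤ N, the point (S, max_{j ∈ {1,…,K−1}} L_j(S)) lies in the convex hull of {Q_1, …, Q_K}. -/

import Mathlib

/-- The lower-bound storage-rate point `Q_m = (mN/K, N(K−m)/(Km))`. -/
noncomputable def Qpt (K N m : ℕ) : ℝ × ℝ :=
  ((m : ℝ) * N / K, (N : ℝ) * ((K : ℝ) - m) / ((K : ℝ) * m))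

/-- The `j`-th lower-bound line on the worst-case communication rate:
`L_j(S) = N(K−j)/(Kj) − K(S − jN/K)/(j(j+1))`. -/
noncomputable def Lline (K N j : ℕ) (S : ℝ) : ℝ :=
  (N : ℝ) * ((K : ℝ) - (j : ℝ)) / ((K : ℝ) * (j : ℝ)) -
    (K : ℝ) * (S - (j : ℝ) * (N : ℝ) / (K : ℝ)) / ((j : ℝ) * ((j : ℝ) + 1))

lemma Lline_affine (K N j : ℕ) (hK : 1 ≤ K) (hj : 1 ≤ j) (θ a b : ℝ) :
    Lline K N j (θ * a + (1 - θ) * b) =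
      θ * Lline K N j a + (1 - θ) * Lline K N j b := by
  have hj0 : (j : ℝ) ≠ 0 := by positivity
  have hj1 : (j : ℝ) + 1 ≠ 0 := by positivity
  have hK0 : (K : ℝ) ≠ 0 := by positivity
  unfold Lline
  field_simp
  ring

lemma Lline_at_Q (K N j m : ℕ) (hK : 1 ≤ K) (hj : 1 ≤ j) (hm : 1 ≤ m) :
    Lline K N j ((m : ℝ) * N / K) ≤ (N : ℝ) * ((K : ℝ) - m) / ((K : ℝ) * m) := by
  have hj0 : (0:ℝ) < (j : ℝ) := by positivity
  have hj1 : (0:ℝ) < (j : ℝ) + 1 := by positivity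
  have hK0 : (0:ℝ) < (K : ℝ) := by positivity
  have hm0 : (0:ℝ) < (m : ℝ) := by positivity
  rw [← sub_nonneg]
  have key : (N : ℝ) * ((K : ℝ) - m) / ((K : ℝ) * m) - Lline K N j ((m : ℝ) * N / K)
      = (N : ℝ) * (((j:ℝ) - m) * ((j:ℝ) - m + 1)) / ((m:ℝ) * (j:ℝ) * ((j:ℝ) + 1)) := by
    unfold Lline
    field_simp
    ring
  rw [key]
  have hprod : (0:ℝ) ≤ ((j:ℝ) - m) * ((j:ℝ) - m + 1) := by
    rcases le_or_gt m j with h | h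
    · have : (m:ℝ) ≤ j := by exact_mod_cast h
      nlinarith
    · have : (j:ℝ) + 1 ≤ m := by exact_mod_cast h
      nlinarith
  positivity

lemma Lline_eq_Q (K N j : ℕ) (hK : 1 ≤ K) (hj : 1 ≤ j) :
    Lline K N j ((j : ℝ) * N / K) = (N : ℝ) * ((K : ℝ) - j) / ((K : ℝ) * j) := by
  have hj0 : (j : ℝ) ≠ 0 := by positivity
  have hj1 : (j : ℝ) + 1 ≠ 0 := by positivity
  have hK0 : (K : ℝ) ≠ 0 := by positivity
  unfold Lline
  field_simp
  ring

lemma Lline_eq_Q' (K N j : ℕ) (hK : 1 ≤ K) (hj : 1 ≤ j) :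
    Lline K N j (((j : ℝ) + 1) * N / K)
      = (N : ℝ) * ((K : ℝ) - ((j:ℝ)+1)) / ((K : ℝ) * ((j:ℝ)+1)) := by
  have hj0 : (j : ℝ) ≠ 0 := by positivity
  have hj1 : (j : ℝ) + 1 ≠ 0 := by positivity
  have hK0 : (K : ℝ) ≠ 0 := by positivity
  unfold Lline
  field_simp
  ring

/-- On the storage range `[N/K, N]`, the pointwise maximum of the lower-bound lines `L_j`
coincides with the lower convex envelope of the points `Q_1,…,Q_K`: the point
`(S, max_{1 ≤ j ≤ K−1} L_j(S))` lies in the convex hull of `{Q_1,…,Q_K}`. -/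
theorem lower_bound_in_convexHull (K N : ℕ) (hK : 2 ≤ K) (hN : 1 ≤ N) :
    ∀ S : ℝ, (N : ℝ) / K ≤ S → S ≤ (N : ℝ) →
      (S, (Finset.Icc 1 (K - 1)).sup' (Finset.nonempty_Icc.mpr (by omega))
          (fun j => Lline K N j S)) ∈
        convexHull ℝ (Qpt K N '' {m | 1 ≤ m ∧ m ≤ K}) := by
  intro S hS1 hS2
  have hK0 : (0:ℝ) < (K : ℝ) := by positivity
  have hN0 : (0:ℝ) < (N : ℝ) := by positivity
  set t : ℝ := S * K / N with ht_def
  have ht1 : 1 ≤ t := by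
    rw [ht_def, le_div_iff₀ hN0]
    rw [div_le_iff₀ hK0] at hS1
    linarith
  have htK : t ≤ K := by
    rw [ht_def, div_le_iff₀ hN0]
    nlinarith
  set j0 : ℕ := min (K - 1) (Int.toNat ⌊t⌋) with hj0_def
  have hfl1 : (1:ℤ) ≤ ⌊t⌋ := by
    have := Int.le_floor.mpr (by exact_mod_cast ht1 : ((1:ℤ):ℝ) ≤ t)
    exact this
  have hj0_ge : 1 ≤ j0 := by
    have : 1 ≤ Int.toNat ⌊t⌋ := by omega
    omega
  have hj0_le : j0 ≤ K - 1 := min_le_left _ _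
  have hj0_le_t : (j0 : ℝ) ≤ t := by
    have h1 : (j0 : ℤ) ≤ ⌊t⌋ := by
      have : j0 ≤ Int.toNat ⌊t⌋ := min_le_right _ _
      omega
    calc (j0 : ℝ) = ((j0 : ℤ) : ℝ) := by push_cast; ring
      _ ≤ (⌊t⌋ : ℝ) := by exact_mod_cast h1
      _ ≤ t := Int.floor_le t
  have ht_le : t ≤ (j0 : ℝ) + 1 := by
    rcases le_or_gt (Int.toNat ⌊t⌋) (K - 1) with h | h
    · have hj0eq : j0 = Int.toNat ⌊t⌋ := by omega
      have : t < (⌊t⌋ : ℝ) + 1 := Int.lt_floor_add_one t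
      have h2 : ((Int.toNat ⌊t⌋ : ℕ) : ℝ) = (⌊t⌋ : ℝ) := by
        have : ((Int.toNat ⌊t⌋ : ℤ) : ℝ) = (⌊t⌋ : ℝ) := by
          congr 1; omega
        exact_mod_cast this
      rw [hj0eq, h2]; linarith
    · have hj0eq : j0 = K - 1 := by omega
      have : ((j0 : ℝ) + 1) = (K : ℝ) := by
        rw [hj0eq]
        have : ((K - 1 : ℕ) : ℝ) = (K : ℝ) - 1 := by
          have : (1:ℕ) ≤ K := by omega
          push_cast [this]; ring
        rw [this]; ring
      rw [this]; exact htK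
  -- convex combination coefficient
  set θ : ℝ := ((j0 : ℝ) + 1) - t with hθ_def
  have hθ0 : 0 ≤ θ := by rw [hθ_def]; linarith
  have hθ1 : 0 ≤ 1 - θ := by rw [hθ_def]; linarith
  have hS_eq : S = θ * ((j0 : ℝ) * N / K) + (1 - θ) * (((j0 : ℝ) + 1) * N / K) := by
    have hteq : t * N = S * K := by
      rw [ht_def]; field_simp
    rw [hθ_def]
    field_simp
    nlinarith [hteq]
  have hj0K : j0 + 1 ≤ K := by omega
  have hcastj1 : ((j0 + 1 : ℕ) : ℝ) = (j0 : ℝ) + 1 := by push_cast; ring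
  -- membership of the two endpoints
  have hQ1 : Qpt K N j0 ∈ Qpt K N '' {m | 1 ≤ m ∧ m ≤ K} :=
    ⟨j0, ⟨hj0_ge, by omega⟩, rfl⟩
  have hQ2 : Qpt K N (j0 + 1) ∈ Qpt K N '' {m | 1 ≤ m ∧ m ≤ K} :=
    ⟨j0 + 1, ⟨by omega, hj0K⟩, rfl⟩
  have hmem := (convex_convexHull ℝ (Qpt K N '' {m | 1 ≤ m ∧ m ≤ K}))
    (subset_convexHull ℝ _ hQ1) (subset_convexHull ℝ _ hQ2) hθ0 hθ1 (by ring)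
  -- identify the point
  have hK1 : 1 ≤ K := by omega
  have hy1 := Lline_eq_Q K N j0 hK1 hj0_ge
  have hy2 := Lline_eq_Q' K N j0 hK1 hj0_ge
  have hLsup : (Finset.Icc 1 (K - 1)).sup' (Finset.nonempty_Icc.mpr (by omega))
      (fun j => Lline K N j S)
      = θ * ((N : ℝ) * ((K : ℝ) - j0) / ((K : ℝ) * j0))
        + (1 - θ) * ((N : ℝ) * ((K : ℝ) - ((j0:ℝ)+1)) / ((K : ℝ) * ((j0:ℝ)+1))) := by
    apply le_antisymm
    · apply Finset.sup'_le
      intro j hj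
      simp only [Finset.mem_Icc] at hj
      have hj1 : 1 ≤ j := hj.1
      have haff := Lline_affine K N j hK1 hj1 θ ((j0 : ℝ) * N / K) (((j0 : ℝ) + 1) * N / K)
      rw [hS_eq, haff]
      have h1 := Lline_at_Q K N j j0 hK1 hj1 hj0_ge
      have h2 := Lline_at_Q K N j (j0 + 1) hK1 hj1 (by omega)
      rw [hcastj1] at h2
      exact add_le_add (mul_le_mul_of_nonneg_left h1 hθ0)
        (mul_le_mul_of_nonneg_left h2 hθ1)
    · have hj0mem : j0 ∈ Finset.Icc 1 (K - 1) := Finset.mem_Icc.mpr ⟨hj0_ge, hj0_le⟩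
      refine le_trans ?_ (Finset.le_sup' (fun j => Lline K N j S) hj0mem)
      have haff := Lline_affine K N j0 hK1 hj0_ge θ ((j0 : ℝ) * N / K) (((j0 : ℝ) + 1) * N / K)
      have heq : Lline K N j0 S = θ * ((N : ℝ) * ((K : ℝ) - j0) / ((K : ℝ) * j0))
          + (1 - θ) * ((N : ℝ) * ((K : ℝ) - ((j0:ℝ)+1)) / ((K : ℝ) * ((j0:ℝ)+1))) := by
        rw [hS_eq, haff, hy1, hy2]
      exact le_of_eq heq.symm
  have hpt : (S, (Finset.Icc 1 (K - 1)).sup' (Finset.nonempty_Icc.mpr (by omega))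
      (fun j => Lline K N j S))
      = θ • Qpt K N j0 + (1 - θ) • Qpt K N (j0 + 1) := by
    unfold Qpt
    rw [Prod.smul_mk, Prod.smul_mk, Prod.mk_add_mk, Prod.mk.injEq]
    constructor
    · simpa [smul_eq_mul] using hS_eq
    · rw [hLsup]
      simp only [smul_eq_mul]
      push_cast
      ring
  rw [hpt]
  exact hmem
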